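/- For every subset D ⊆ {1,…,n−1}, the vector v_D generates P_D as a right H𝔖_n-module: P_D = v_D · H𝔖_n. -/
import Mathlib


open scoped Classical

set_option maxHeartbeats 1000000
set_option synthInstance.maxHeartbeats 400000

noncomputable section

/-- The symmetric group on `{1, …, n}`, 0-indexed as permutations of `Fin n`
(so positions/descents are indexed by `i ∈ {0, …, n-2}` instead of `{1, …, n-1}`). -/
abbrev PermN (n : ℕ) := Equiv.Perm (Fin n)

/-- The vector space `ℂ𝔖ₙ` with basis the symmetric group. -/
abbrev CS (n : ℕ) := Equiv.Perm (Fin n) →₀ ℂ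

/-- The elementary transposition `sᵢ` exchanging `i` and `i+1` (0-indexed). -/
def swapAt (n i : ℕ) (h : i + 1 < n) : PermN n :=
  Equiv.swap ⟨i, Nat.lt_of_succ_lt h⟩ ⟨i + 1, h⟩

/-- The operator `σᵢ` on `ℂ𝔖ₙ`: right multiplication by `sᵢ` (action on positions),
`μ ↦ μ sᵢ`. -/
def sigmaOp (n i : ℕ) : Module.End ℂ (CS n) :=
  if h : i + 1 < n then Finsupp.lmapDomain ℂ ℂ (fun μ => μ * swapAt n i h) else 1

/-- The elementary decreasing sorting operator `πᵢ` on `ℂ𝔖ₙ`: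
`μ ↦ μ` if `μᵢ > μᵢ₊₁` and `μ ↦ μ sᵢ` otherwise. -/
def piOp (n i : ℕ) : Module.End ℂ (CS n) :=
  if h : i + 1 < n then
    Finsupp.lmapDomain ℂ ℂ (fun μ : PermN n =>
      if μ ⟨i + 1, h⟩ < μ ⟨i, Nat.lt_of_succ_lt h⟩ then μ else μ * swapAt n i h)
  else 1

/-- The operator `σ̄ᵢ` on `ℂ𝔖ₙ`: left multiplication by `sᵢ` (action on values),
`μ ↦ sᵢ μ`. -/
def sigmaBarOp (n i : ℕ) : Module.End ℂ (CS n) :=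
  if h : i + 1 < n then Finsupp.lmapDomain ℂ ℂ (fun μ => swapAt n i h * μ) else 1

/-- The operator `σ_σ` of right multiplication by a permutation `σ`
(equal to the product of the `σᵢ` along any reduced word for `σ`). -/
def rightMulOp (n : ℕ) (σ : PermN n) : Module.End ℂ (CS n) :=
  Finsupp.lmapDomain ℂ ℂ (fun μ => μ * σ)

/-- The algebra `H𝔖ₙ`: the subalgebra of `End(ℂ𝔖ₙ)` generated by the operators
`σ₁, …, σ_{n-1}, π₁, …, π_{n-1}`.

Note on conventions: the paper composes operators left to right, `v·(fg) = (v·f)·g`,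
while multiplication in `Module.End` is `(f * g) v = f (g v)`.  Hence the paper's
product `f·g` is `g * f` here.  This does not affect the generated subalgebra. -/
def HS (n : ℕ) : Subalgebra ℂ (Module.End ℂ (CS n)) :=
  Algebra.adjoin ℂ
    ({f | ∃ i, ∃ _ : i + 1 < n, f = sigmaOp n i} ∪ {f | ∃ i, ∃ _ : i + 1 < n, f = piOp n i})

/-- The descent set `Des(μ) = {i : μᵢ > μᵢ₊₁}` (0-indexed positions). -/
def Des (n : ℕ) (μ : PermN n) : Set ℕ :=
  {i | ∃ h : i + 1 < n, μ ⟨i + 1, h⟩ < μ ⟨i, Nat.lt_of_succ_lt h⟩}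

/-- The module `P_D`: the vectors of `ℂ𝔖ₙ` that are left `i`-antisymmetric
for every `i ∉ D` (0-indexed, `i+1 < n`). -/
def PD (n : ℕ) (D : Set ℕ) : Submodule ℂ (CS n) :=
  ⨅ i : {i : ℕ // i + 1 < n ∧ i ∉ D}, LinearMap.ker (1 + sigmaBarOp n i.1)

/-- The Young subgroup `𝔖_⟨D⟩` generated by the `sᵢ` for `i ∉ D`. -/
def Young (n : ℕ) (D : Set ℕ) : Subgroup (PermN n) :=
  Subgroup.closure {g | ∃ i, ∃ h : i + 1 < n, i ∉ D ∧ g = swapAt n i h}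

/-- The vector `v_D = ∑_{ν ∈ 𝔖_⟨D⟩} (-1)^{ℓ(ν)} ν` (the sign `(-1)^{ℓ(ν)}` is the
signature of `ν`). -/
def vD (n : ℕ) (D : Set ℕ) : CS n :=
  ∑ᶠ ν ∈ (Young n D : Set (PermN n)),
    ((Equiv.Perm.sign ν : ℤ) : ℂ) • Finsupp.single ν 1

/-- The vector `v_σ := v_{Des(σ⁻¹)} · σ_σ`. -/
def vPerm (n : ℕ) (σ : PermN n) : CS n :=
  rightMulOp n σ (vD n (Des n σ⁻¹))

/-! ### Auxiliary lemmas -/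

/-- Left multiplication operator. -/
def lOp (n : ℕ) (ν : PermN n) : Module.End ℂ (CS n) :=
  Finsupp.lmapDomain ℂ ℂ (fun μ => ν * μ)

lemma lOp_single {n : ℕ} (ν μ : PermN n) :
    lOp n ν (Finsupp.single μ (1 : ℂ)) = Finsupp.single (ν * μ) 1 := by
  simp [lOp, Finsupp.lmapDomain_apply, Finsupp.mapDomain_single]

lemma rightMulOp_single {n : ℕ} (σ μ : PermN n) :
    rightMulOp n σ (Finsupp.single μ (1 : ℂ)) = Finsupp.single (μ * σ) 1 := by
  simp [rightMulOp, Finsupp.lmapDomain_apply, Finsupp.mapDomain_single]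

lemma lOp_one {n : ℕ} : lOp n 1 = 1 := by
  apply LinearMap.ext; intro v
  simp only [lOp, Finsupp.lmapDomain_apply, one_mul, Module.End.one_apply]
  exact Finsupp.mapDomain_id

lemma lOp_mul {n : ℕ} (a b : PermN n) : lOp n (a * b) = lOp n a * lOp n b := by
  apply LinearMap.ext; intro v
  simp only [lOp, Finsupp.lmapDomain_apply, Module.End.mul_apply]
  have h : (fun μ : PermN n => a * b * μ) = (fun μ => a * μ) ∘ (fun μ => b * μ) := by
    funext μ; simp [mul_assoc]
  rw [h, Finsupp.mapDomain_comp]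

lemma rightMulOp_one {n : ℕ} : rightMulOp n 1 = 1 := by
  apply LinearMap.ext; intro v
  simp only [rightMulOp, Finsupp.lmapDomain_apply, mul_one, Module.End.one_apply]
  exact Finsupp.mapDomain_id

lemma rightMulOp_mul {n : ℕ} (a b : PermN n) :
    rightMulOp n (a * b) = rightMulOp n b * rightMulOp n a := by
  apply LinearMap.ext; intro v
  simp only [rightMulOp, Finsupp.lmapDomain_apply, Module.End.mul_apply]
  have h : (fun μ : PermN n => μ * (a * b)) = (fun μ => μ * b) ∘ (fun μ => μ * a) := by
    funext μ; simp [mul_assoc]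
  rw [h, Finsupp.mapDomain_comp]

lemma sigmaBarOp_eq {n i : ℕ} (h : i + 1 < n) : sigmaBarOp n i = lOp n (swapAt n i h) := by
  rw [sigmaBarOp, dif_pos h]; rfl

lemma sigmaOp_eq {n i : ℕ} (h : i + 1 < n) : sigmaOp n i = rightMulOp n (swapAt n i h) := by
  rw [sigmaOp, dif_pos h]; rfl

lemma mem_PD_iff {n : ℕ} {D : Set ℕ} {v : CS n} :
    v ∈ PD n D ↔ ∀ (i : ℕ) (h : i + 1 < n), i ∉ D → lOp n (swapAt n i h) v = -v := by
  rw [PD, Submodule.mem_iInf]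
  constructor
  · intro H i h hiD
    have h1 := H ⟨i, h, hiD⟩
    rw [LinearMap.mem_ker, LinearMap.add_apply, Module.End.one_apply, sigmaBarOp_eq h] at h1
    exact eq_neg_of_add_eq_zero_right h1
  · rintro H ⟨i, h, hiD⟩
    rw [LinearMap.mem_ker, LinearMap.add_apply, Module.End.one_apply, sigmaBarOp_eq h,
      H i h hiD]
    simp

lemma sign_sq {n : ℕ} (a : PermN n) :
    ((Equiv.Perm.sign a : ℤ) : ℂ) * ((Equiv.Perm.sign a : ℤ) : ℂ) = 1 := by
  rcases Int.units_eq_one_or (Equiv.Perm.sign a) with h | h <;> simp [h]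

lemma lOp_eq_sign_smul {n : ℕ} {D : Set ℕ} {v : CS n} (hv : v ∈ PD n D) {ν : PermN n}
    (hν : ν ∈ Young n D) :
    lOp n ν v = ((Equiv.Perm.sign ν : ℤ) : ℂ) • v := by
  induction hν using Subgroup.closure_induction with
  | mem x hx =>
    obtain ⟨i, h, hiD, rfl⟩ := hx
    rw [mem_PD_iff] at hv
    rw [hv i h hiD, swapAt, Equiv.Perm.sign_swap (by simp [Fin.ext_iff])]
    simp
  | one => rw [lOp_one]; simp
  | mul a b ha hb iha ihb =>
    rw [lOp_mul, Module.End.mul_apply, ihb, map_smul, iha, smul_smul, map_mul]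
    push_cast
    ring_nf
  | inv a ha iha =>
    have h2 : lOp n a⁻¹ (lOp n a v) = v := by
      rw [← Module.End.mul_apply, ← lOp_mul, inv_mul_cancel, lOp_one, Module.End.one_apply]
    rw [iha, map_smul] at h2
    have h3 : ((Equiv.Perm.sign a : ℤ) : ℂ) • v
        = ((Equiv.Perm.sign a : ℤ) : ℂ) • (((Equiv.Perm.sign a : ℤ) : ℂ) • lOp n a⁻¹ v) := by
      rw [h2]
    rw [smul_smul, sign_sq, one_smul] at h3
    rw [← h3, Equiv.Perm.sign_inv]


lemma vD_eq_sum {n : ℕ} (D : Set ℕ) (hf : (Young n D : Set (PermN n)).Finite) :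
    vD n D = ∑ ν ∈ hf.toFinset,
      ((Equiv.Perm.sign ν : ℤ) : ℂ) • Finsupp.single ν 1 := by
  rw [vD, finsum_mem_eq_finite_toFinset_sum _ hf]

lemma swapAt_mul_self {n i : ℕ} (h : i + 1 < n) : swapAt n i h * swapAt n i h = 1 := by
  rw [swapAt]; exact Equiv.swap_mul_self _ _

lemma vD_mem_PD {n : ℕ} (D : Set ℕ) : vD n D ∈ PD n D := by
  rw [mem_PD_iff]
  intro i h hiD
  have ht : swapAt n i h ∈ Young n D := Subgroup.subset_closure ⟨i, h, hiD, rfl⟩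
  rw [vD_eq_sum D (Set.toFinite _), map_sum, ← Finset.sum_neg_distrib]
  refine Finset.sum_nbij' (fun ν => swapAt n i h * ν) (fun ν => swapAt n i h * ν)
    ?_ ?_ ?_ ?_ ?_
  · intro ν hν
    rw [Set.Finite.mem_toFinset] at hν ⊢
    exact mul_mem ht hν
  · intro ν hν
    rw [Set.Finite.mem_toFinset] at hν ⊢
    exact mul_mem ht hν
  · intro ν _
    show swapAt n i h * (swapAt n i h * ν) = ν
    rw [← mul_assoc, swapAt_mul_self, one_mul]
  · intro ν _
    show swapAt n i h * (swapAt n i h * ν) = ν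
    rw [← mul_assoc, swapAt_mul_self, one_mul]
  · intro ν _
    rw [map_smul, lOp_single]
    show ((Equiv.Perm.sign ν : ℤ) : ℂ) • Finsupp.single (swapAt n i h * ν) (1 : ℂ)
      = -(((Equiv.Perm.sign (swapAt n i h * ν) : ℤ) : ℂ) •
          Finsupp.single (swapAt n i h * ν) (1 : ℂ))
    have hsign : Equiv.Perm.sign (swapAt n i h * ν) = -Equiv.Perm.sign ν := by
      rw [map_mul, swapAt, Equiv.Perm.sign_swap (by simp [Fin.ext_iff]), neg_one_mul]
    rw [hsign]
    push_cast
    rw [neg_smul, neg_neg]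

lemma sigmaOp_mem {n : ℕ} (i : ℕ) : sigmaOp n i ∈ HS n := by
  by_cases h : i + 1 < n
  · exact Algebra.subset_adjoin (Or.inl ⟨i, h, rfl⟩)
  · rw [sigmaOp, dif_neg h]; exact one_mem _

lemma rightMulOp_mem {m : ℕ} (σ : PermN (m + 1)) : rightMulOp (m + 1) σ ∈ HS (m + 1) := by
  have hσ : σ ∈ Submonoid.closure
      (Set.range fun i : Fin m => Equiv.swap i.castSucc i.succ) := by
    rw [Equiv.Perm.mclosure_swap_castSucc_succ m]; trivial
  induction hσ using Submonoid.closure_induction with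
  | one => rw [rightMulOp_one]; exact one_mem _
  | mem x hx =>
    obtain ⟨i, rfl⟩ := hx
    have hi : (i : ℕ) + 1 < m + 1 := Nat.succ_lt_succ i.isLt
    have he : Equiv.swap i.castSucc i.succ = swapAt (m + 1) i hi := by
      rw [swapAt]; congr 1
    show rightMulOp (m + 1) (Equiv.swap i.castSucc i.succ) ∈ HS (m + 1)
    rw [he, ← sigmaOp_eq hi]
    exact sigmaOp_mem _
  | mul x y hx hy ihx ihy => rw [rightMulOp_mul]; exact mul_mem ihy ihx


lemma lOp_apply_eq_sum {n : ℕ} (ν : PermN n) (v : CS n) :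
    lOp n ν v = ∑ μ ∈ v.support, v μ • Finsupp.single (ν * μ) 1 := by
  conv_lhs => rw [← Finsupp.sum_single v]
  rw [Finsupp.sum, map_sum]
  refine Finset.sum_congr rfl fun μ _ => ?_
  rw [show Finsupp.single μ (v μ) = v μ • Finsupp.single μ (1 : ℂ) by
    rw [Finsupp.smul_single', mul_one], map_smul, lOp_single]

lemma lOp_rightMulOp_comm {n : ℕ} (ν σ : PermN n) (v : CS n) :
    lOp n ν (rightMulOp n σ v) = rightMulOp n σ (lOp n ν v) := by
  simp only [lOp, rightMulOp, Finsupp.lmapDomain_apply]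
  rw [← Finsupp.mapDomain_comp, ← Finsupp.mapDomain_comp]
  rfl

lemma key_surj {m : ℕ} {D : Set ℕ} {v : CS (m + 1)} (hv : v ∈ PD (m + 1) D) :
    ∃ f ∈ HS (m + 1), f (vD (m + 1) D) = v := by
  classical
  have hfin : ((Young (m + 1) D : Set (PermN (m + 1)))).Finite := Set.toFinite _
  set Yf := hfin.toFinset with hYf
  have h1Y : (1 : PermN (m + 1)) ∈ Yf := by
    rw [hYf, Set.Finite.mem_toFinset]; exact one_mem _
  have hcard : ((Yf.card : ℂ)) ≠ 0 := by
    have h0 : 0 < Yf.card := Finset.card_pos.mpr ⟨1, h1Y⟩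
    exact_mod_cast h0.ne'
  refine ⟨(Yf.card : ℂ)⁻¹ • ∑ μ ∈ v.support, v μ • rightMulOp (m + 1) μ, ?_, ?_⟩
  · exact Subalgebra.smul_mem _
      (Subalgebra.sum_mem _ fun μ _ => Subalgebra.smul_mem _ (rightMulOp_mem μ) _) _
  · rw [LinearMap.smul_apply, LinearMap.sum_apply]
    simp only [LinearMap.smul_apply]
    have hterm : ∀ μ : PermN (m + 1), rightMulOp (m + 1) μ (vD (m + 1) D)
        = ∑ ν ∈ Yf, ((Equiv.Perm.sign ν : ℤ) : ℂ) • Finsupp.single (ν * μ) 1 := by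
      intro μ
      rw [vD_eq_sum D hfin, map_sum]
      exact Finset.sum_congr rfl fun ν _ => by rw [map_smul, rightMulOp_single]
    have hmain : ∑ μ ∈ v.support, v μ • rightMulOp (m + 1) μ (vD (m + 1) D)
        = ∑ ν ∈ Yf, ((Equiv.Perm.sign ν : ℤ) : ℂ) • lOp (m + 1) ν v := by
      calc ∑ μ ∈ v.support, v μ • rightMulOp (m + 1) μ (vD (m + 1) D)
          = ∑ μ ∈ v.support, ∑ ν ∈ Yf,
              ((Equiv.Perm.sign ν : ℤ) : ℂ) • (v μ • Finsupp.single (ν * μ) 1) := by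
            refine Finset.sum_congr rfl fun μ _ => ?_
            rw [hterm μ, Finset.smul_sum]
            exact Finset.sum_congr rfl fun ν _ => smul_comm _ _ _
        _ = ∑ ν ∈ Yf, ∑ μ ∈ v.support,
              ((Equiv.Perm.sign ν : ℤ) : ℂ) • (v μ • Finsupp.single (ν * μ) 1) :=
            Finset.sum_comm
        _ = ∑ ν ∈ Yf, ((Equiv.Perm.sign ν : ℤ) : ℂ) • lOp (m + 1) ν v := by
            refine Finset.sum_congr rfl fun ν _ => ?_
            rw [lOp_apply_eq_sum, Finset.smul_sum]
    rw [hmain]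
    have hsum : ∑ ν ∈ Yf, ((Equiv.Perm.sign ν : ℤ) : ℂ) • lOp (m + 1) ν v
        = ∑ _ν ∈ Yf, v := by
      refine Finset.sum_congr rfl fun ν hν => ?_
      rw [lOp_eq_sign_smul hv (by rwa [hYf, Set.Finite.mem_toFinset] at hν),
        smul_smul, sign_sq, one_smul]
    rw [hsum, Finset.sum_const, ← Nat.cast_smul_eq_nsmul ℂ, smul_smul,
      inv_mul_cancel₀ hcard, one_smul]


lemma swap_lt_aux {n j : ℕ} (hj : j + 1 < n) {x y : Fin n}
    (h1 : x < y) (h2 : swapAt n j hj y < swapAt n j hj x) :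
    x = ⟨j, Nat.lt_of_succ_lt hj⟩ ∧ y = ⟨j + 1, hj⟩ := by
  rw [swapAt, Equiv.swap_apply_def, Equiv.swap_apply_def] at h2
  split_ifs at h2 <;> simp only [Fin.ext_iff, Fin.lt_def] at * <;> omega

/-- If `μ a = c` and `μ b = d` then `swap c d * μ * swap a b = μ`. -/
lemma conj_swap_eq {n : ℕ} {a b c d : Fin n} (hab : a ≠ b) {μ : PermN n}
    (h0 : μ a = c) (h1 : μ b = d) :
    Equiv.swap c d * μ * Equiv.swap a b = μ := by
  have hcd : c ≠ d := by
    rw [← h0, ← h1]; exact fun h => hab (μ.injective h)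
  ext k
  rcases eq_or_ne k a with rfl | hka
  · rw [Equiv.Perm.mul_apply, Equiv.Perm.mul_apply, Equiv.swap_apply_left, h1,
      Equiv.swap_apply_right, h0]
  · rcases eq_or_ne k b with rfl | hkb
    · rw [Equiv.Perm.mul_apply, Equiv.Perm.mul_apply, Equiv.swap_apply_right, h0,
        Equiv.swap_apply_left, h1]
    · rw [Equiv.Perm.mul_apply, Equiv.Perm.mul_apply,
        Equiv.swap_apply_of_ne_of_ne hka hkb,
        Equiv.swap_apply_of_ne_of_ne
          (fun h => hka (μ.injective (h.trans h0.symm)))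
          (fun h => hkb (μ.injective (h.trans h1.symm)))]

lemma piOp_single {n i : ℕ} (hi : i + 1 < n) (μ : PermN n) :
    piOp n i (Finsupp.single μ (1 : ℂ))
      = Finsupp.single (if μ ⟨i + 1, hi⟩ < μ ⟨i, Nat.lt_of_succ_lt hi⟩ then μ
          else μ * swapAt n i hi) 1 := by
  rw [piOp, dif_pos hi]
  simp [Finsupp.lmapDomain_apply, Finsupp.mapDomain_single]

lemma piOp_preserve {n i j : ℕ} (hj : j + 1 < n) (v : CS n)
    (hv : lOp n (swapAt n j hj) v = -v) :
    lOp n (swapAt n j hj) (piOp n i v) = -(piOp n i v) := by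
  by_cases hi : i + 1 < n
  swap
  · rw [piOp, dif_neg hi, Module.End.one_apply, hv]
  -- the operator (lOp t + 1) ∘ piOp i ∘ (1 - lOp t) vanishes
  set t := swapAt n j hj with hT
  set F : Module.End ℂ (CS n) :=
    (lOp n t + 1) ∘ₗ piOp n i ∘ₗ (1 - lOp n t) with hF
  have htt : t * t = 1 := swapAt_mul_self hj
  have hFz : F = 0 := by
    apply Finsupp.lhom_ext
    intro μ c
    have hc : Finsupp.single μ c = c • Finsupp.single μ (1 : ℂ) := by
      rw [Finsupp.smul_single', mul_one]
    rw [hc, map_smul, LinearMap.zero_apply]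
    suffices h : F (Finsupp.single μ (1 : ℂ)) = 0 by rw [h, smul_zero]
    have expand : F (Finsupp.single μ (1 : ℂ))
        = piOp n i (Finsupp.single μ 1) + lOp n t (piOp n i (Finsupp.single μ 1))
          - (piOp n i (Finsupp.single (t * μ) 1)
             + lOp n t (piOp n i (Finsupp.single (t * μ) 1))) := by
      rw [hF]
      simp only [LinearMap.comp_apply, LinearMap.sub_apply, Module.End.one_apply,
        LinearMap.add_apply, lOp_single, map_sub]
      abel
    rw [expand]
    set i0 : Fin n := ⟨i, Nat.lt_of_succ_lt hi⟩ with hi0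
    set i1 : Fin n := ⟨i + 1, hi⟩ with hi1
    have hii : i0 ≠ i1 := by simp [hi0, hi1, Fin.ext_iff]
    have hui : swapAt n i hi = Equiv.swap i0 i1 := rfl
    have htμ0 : (t * μ) i0 = t (μ i0) := rfl
    have htμ1 : (t * μ) i1 = t (μ i1) := rfl
    have hinj : t (μ i1) = t (μ i0) → False := fun h =>
      hii (μ.injective (t.injective h)).symm
    rw [piOp_single hi, piOp_single hi]
    by_cases c1 : μ i1 < μ i0 <;> by_cases c2 : (t * μ) i1 < (t * μ) i0
    · rw [if_pos c1, if_pos c2, lOp_single, lOp_single, ← mul_assoc, htt, one_mul]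
      abel
    · -- descent at μ, no descent at t μ : μ i1 = j0, μ i0 = j1
      rw [if_pos c1, if_neg c2, lOp_single, lOp_single]
      rw [htμ0, htμ1] at c2
      have h2' : t (μ i0) < t (μ i1) :=
        lt_of_le_of_ne (le_of_not_gt c2) (fun h => hinj h.symm)
      obtain ⟨hx, hy⟩ := swap_lt_aux hj c1 h2'
      have hconj : t * μ * swapAt n i hi = μ := by
        rw [hui, hT, swapAt, Equiv.swap_comm]
        exact conj_swap_eq hii hy hx
      rw [hconj]
      abel
    · -- no descent at μ, descent at t μ : μ i0 = j0, μ i1 = j1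
      rw [if_neg c1, if_pos c2, lOp_single, lOp_single]
      rw [htμ0, htμ1] at c2
      have h1' : μ i0 < μ i1 :=
        lt_of_le_of_ne (le_of_not_gt c1) (fun h => hii (μ.injective h))
      obtain ⟨hx, hy⟩ := swap_lt_aux hj h1' c2
      have hconj : t * (μ * swapAt n i hi) = μ := by
        rw [← mul_assoc, hui, hT, swapAt]
        exact conj_swap_eq hii hx hy
      have hμu : μ * swapAt n i hi = t * μ := by
        have h5 := congrArg (fun z => t * z) hconj
        simp only [← mul_assoc, htt, one_mul] at h5
        exact h5
      rw [hμu, show t * (t * μ) = μ from by rw [← mul_assoc, htt, one_mul]]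
      abel
    · rw [if_neg c1, if_neg c2, lOp_single, lOp_single,
        show t * (t * μ * swapAt n i hi) = μ * swapAt n i hi from by
          rw [← mul_assoc, ← mul_assoc, htt, one_mul],
        show t * μ * swapAt n i hi = t * (μ * swapAt n i hi) from mul_assoc t μ _]
      abel
  have h2v : (1 - lOp n t) v = (2 : ℂ) • v := by
    rw [LinearMap.sub_apply, Module.End.one_apply, hv, sub_neg_eq_add, two_smul]
  have hFv : F v = 0 := by rw [hFz]; rfl
  rw [hF, LinearMap.comp_apply, LinearMap.comp_apply, h2v, map_smul, map_smul] at hFv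
  simp only [LinearMap.add_apply, Module.End.one_apply] at hFv
  have h3 : lOp n t (piOp n i v) + piOp n i v = 0 := by
    have h4 := congrArg (fun z => (2 : ℂ)⁻¹ • z) hFv
    simpa [smul_add, smul_smul] using h4
  exact eq_neg_of_add_eq_zero_left h3


lemma HS_preserves {n : ℕ} {D : Set ℕ} {f : Module.End ℂ (CS n)} (hf : f ∈ HS n) :
    ∀ v ∈ PD n D, f v ∈ PD n D := by
  induction hf using Algebra.adjoin_induction with
  | mem g hg =>
    rcases hg with ⟨i, hi, rfl⟩ | ⟨i, hi, rfl⟩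
    · intro v hv
      rw [mem_PD_iff] at hv ⊢
      intro k hk hkD
      rw [sigmaOp_eq hi, lOp_rightMulOp_comm, hv k hk hkD, map_neg]
    · intro v hv
      rw [mem_PD_iff] at hv ⊢
      intro k hk hkD
      exact piOp_preserve hk v (hv k hk hkD)
  | algebraMap r =>
    intro v hv
    rw [Module.algebraMap_end_apply]
    exact Submodule.smul_mem _ _ hv
  | add f g hfm hgm ihf ihg =>
    intro v hv
    rw [LinearMap.add_apply]
    exact Submodule.add_mem _ (ihf v hv) (ihg v hv)
  | mul f g hfm hgm ihf ihg =>
    intro v hv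
    rw [Module.End.mul_apply]
    exact ihf _ (ihg v hv)

/-- `v_D` generates `P_D` as a right `H𝔖ₙ`-module:
`P_D = v_D · H𝔖ₙ = {v_D · f : f ∈ H𝔖ₙ}`. -/
theorem vD_generates (n : ℕ) (hn : 1 ≤ n) (D : Set ℕ) (hD : ∀ i ∈ D, i + 1 < n) :
    (PD n D : Set (CS n)) =
      Set.range (fun a : HS n => (a : Module.End ℂ (CS n)) (vD n D)) := by
  obtain ⟨m, rfl⟩ : ∃ m, n = m + 1 := ⟨n - 1, (Nat.succ_pred_eq_of_pos hn).symm⟩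
  ext v
  constructor
  · intro hvmem
    obtain ⟨f, hf, hfv⟩ := key_surj (v := v) (by exact hvmem)
    exact ⟨⟨f, hf⟩, hfv⟩
  · rintro ⟨⟨f, hf⟩, rfl⟩
    exact HS_preserves hf _ (vD_mem_PD D)

end
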